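/- (Correctness of odd-cycle separation via the auxiliary graph) Let G=(V,E) be a finite simple undirected graph and x:E→[0,1]. Let H be the graph on vertex set V×{0,1} with, for each {u,v}∈E and i∈{0,1}, the parallel edge {(u,i),(v,i)} of weight p = x({u,v}) and the crossing edge {(u,i),(v,1−i)} of weight p = 1−x({u,v}). Then there exist v∈V and a walk in H from (v,0) to (v,1) of total p-weight strictly less than 1 if and only if there exist a simple cycle C of G and F⊆C with |F| odd such that Σ_{e∈F}(1−x(e)) + Σ_{e∈C∖F} x(e) < 1 (i.e., x violates some cycle inequality). -/

import Mathlib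

variable {V : Type*}

/-- The auxiliary graph `H` for odd-cycle separation: two copies of `G` on `V × Bool`,
with parallel edges `{(u,i),(v,i)}` and crossing edges `{(u,i),(v,1−i)}` for every
edge `{u,v}` of `G`. -/
def auxGraph (G : SimpleGraph V) : SimpleGraph (V × Bool) :=
  SimpleGraph.comap Prod.fst G

/-- The weight of a step of a walk in the auxiliary graph: a parallel edge
`{(u,i),(v,i)}` has weight `x({u,v})`, a crossing edge `{(u,i),(v,1−i)}` has
weight `1 − x({u,v})`. -/
noncomputable def stepWeight (x : Sym2 V → ℝ) (a b : V × Bool) : ℝ :=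
  if a.2 = b.2 then x s(a.1, b.1) else 1 - x s(a.1, b.1)

/-- The total weight of a walk in the auxiliary graph (sum of the weights of its
traversed edges, with multiplicity). -/
noncomputable def walkWeight (G : SimpleGraph V) (x : Sym2 V → ℝ) {a b : V × Bool}
    (p : (auxGraph G).Walk a b) : ℝ :=
  (p.darts.map (fun d => stepWeight x d.toProd.1 d.toProd.2)).sum

/-- `C` is the edge set of a simple cycle of `G`. -/
def IsSimpleCycleEdgeSet [DecidableEq V] (G : SimpleGraph V) (C : Finset (Sym2 V)) : Prop :=
  ∃ (v : V) (p : G.Walk v v), p.IsCycle ∧ C = p.edges.toFinset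

open SimpleGraph

namespace OCS

variable {G : SimpleGraph V} {x : Sym2 V → ℝ}

def auxHom (G : SimpleGraph V) : auxGraph G →g G := ⟨Prod.fst, fun h => h⟩

lemma stepWeight_comm (x : Sym2 V → ℝ) (a b : V × Bool) :
    stepWeight x a b = stepWeight x b a := by
  unfold stepWeight
  rw [Sym2.eq_swap]
  by_cases h : a.2 = b.2
  · rw [if_pos h, if_pos h.symm]
  · rw [if_neg h, if_neg fun hh => h hh.symm]

@[simp] lemma walkWeight_nil {a : V × Bool} :
    walkWeight G x (Walk.nil : (auxGraph G).Walk a a) = 0 := by simp [walkWeight]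

@[simp] lemma walkWeight_cons {a b c : V × Bool} (h : (auxGraph G).Adj a b)
    (p : (auxGraph G).Walk b c) :
    walkWeight G x (Walk.cons h p) = stepWeight x a b + walkWeight G x p := by
  simp [walkWeight]

lemma walkWeight_append {a b c : V × Bool} (p : (auxGraph G).Walk a b)
    (q : (auxGraph G).Walk b c) :
    walkWeight G x (p.append q) = walkWeight G x p + walkWeight G x q := by
  simp [walkWeight, Walk.darts_append]

@[simp] lemma walkWeight_copy {a b a' b' : V × Bool} (p : (auxGraph G).Walk a b)
    (h1 : a = a') (h2 : b = b') :
    walkWeight G x (p.copy h1 h2) = walkWeight G x p := by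
  simp [walkWeight, Walk.darts_copy]

lemma walkWeight_reverse {a b : V × Bool} (p : (auxGraph G).Walk a b) :
    walkWeight G x p.reverse = walkWeight G x p := by
  unfold walkWeight
  rw [Walk.darts_reverse, List.map_reverse, List.sum_reverse, List.map_map]
  congr 1
  apply List.map_congr_left
  intro d _
  simp only [Function.comp_apply, Dart.symm_toProd]
  exact (stepWeight_comm x d.toProd.1 d.toProd.2).symm

lemma stepWeight_bounds (hx : ∀ e ∈ G.edgeSet, 0 ≤ x e ∧ x e ≤ 1) {a b : V × Bool}
    (h : (auxGraph G).Adj a b) : 0 ≤ stepWeight x a b ∧ stepWeight x a b ≤ 1 := by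
  have hadj : G.Adj a.1 b.1 := h
  have he := hx s(a.1, b.1) (G.mem_edgeSet.mpr hadj)
  unfold stepWeight
  split <;> constructor <;> linarith [he.1, he.2]

lemma walkWeight_nonneg (hx : ∀ e ∈ G.edgeSet, 0 ≤ x e ∧ x e ≤ 1) {a b : V × Bool}
    (p : (auxGraph G).Walk a b) : 0 ≤ walkWeight G x p := by
  apply List.sum_nonneg
  intro r hr
  rw [List.mem_map] at hr
  obtain ⟨d, hd, rfl⟩ := hr
  exact (stepWeight_bounds hx d.adj).1

lemma even_countP_flip {a b : V × Bool} (q : (auxGraph G).Walk a b) :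
    Even (q.darts.countP (fun d => d.toProd.1.2 != d.toProd.2.2)) ↔ a.2 = b.2 := by
  induction q with
  | nil => simp
  | @cons c d e h p ih =>
    rw [Walk.darts_cons, List.countP_cons]
    by_cases hcd : c.2 = d.2
    · rw [if_neg (by simp [hcd]), Nat.add_zero, ih, hcd]
    · rw [if_pos (by simpa using hcd), Nat.even_add_one, ih]
      cases hc : c.2 <;> cases hd : d.2 <;> cases he : e.2 <;> simp_all

lemma loop_path_eq_nil {c : V} {r : G.Walk c c} (h : r.IsPath) : r = Walk.nil := by
  cases r with
  | nil => rfl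
  | cons h' r' =>
    rw [Walk.cons_isPath_iff] at h
    exact absurd r'.end_mem_support h.2

lemma eq_snd_of_mem_edges_path {a b c : V} {p : G.Walk a b} (hp : p.IsPath)
    (he : s(a, c) ∈ p.edges) : ∃ (h : G.Adj a c) (q : G.Walk c b), p = Walk.cons h q := by
  cases p with
  | nil => simp at he
  | @cons _ d _ h q =>
    rw [Walk.edges_cons, List.mem_cons] at he
    rcases he with he | he
    · obtain rfl : c = d := Sym2.congr_right.mp he
      exact ⟨h, q, rfl⟩
    · exact absurd (q.fst_mem_support_of_mem_edges he) ((Walk.cons_isPath_iff h q).mp hp).2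

lemma isTrail_closed {u : V} {p : G.Walk u u} (hlen : 3 ≤ p.length)
    (hnd : p.support.tail.Nodup) : p.IsTrail := by
  cases p with
  | nil => simp at hlen
  | @cons _ c _ h q =>
    have hq : q.IsPath := (Walk.isPath_def q).mpr (by simpa using hnd)
    rw [Walk.isTrail_cons]
    refine ⟨hq.isTrail, fun he => ?_⟩
    have he' : s(u, c) ∈ q.reverse.edges := by
      rw [Walk.edges_reverse, List.mem_reverse]; exact he
    obtain ⟨h2, r, hr⟩ := eq_snd_of_mem_edges_path hq.reverse he'
    have hrp : (Walk.cons h2 r).IsPath := hr ▸ hq.reverse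
    have hrn : r = Walk.nil := loop_path_eq_nil ((Walk.cons_isPath_iff h2 r).mp hrp).1
    have h1 : q.reverse.length = 1 := by rw [hr, hrn]; simp
    rw [Walk.length_reverse] at h1
    rw [Walk.length_cons] at hlen
    omega
variable [DecidableEq V]

def flipB (F : Finset (Sym2 V)) : ∀ {a b : V}, G.Walk a b → Bool
  | _, _, Walk.nil => false
  | _, _, @Walk.cons _ _ u v _ _ p => (decide (s(u, v) ∈ F)) ^^ flipB F p

@[simp] lemma flipB_nil {F : Finset (Sym2 V)} {a : V} :
    flipB F (Walk.nil : G.Walk a a) = false := rfl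

@[simp] lemma flipB_cons {F : Finset (Sym2 V)} {a c b : V} (h : G.Adj a c) (p : G.Walk c b) :
    flipB F (Walk.cons h p) = ((decide (s(a, c) ∈ F)) ^^ flipB F p) := rfl

def liftWalk (F : Finset (Sym2 V)) :
    ∀ {a b : V} (p : G.Walk a b) (i : Bool), (auxGraph G).Walk (a, i) (b, flipB F p ^^ i)
  | _, _, Walk.nil, i => Walk.nil.copy rfl (by simp)
  | _, _, @Walk.cons _ _ u v _ h p, i =>
      (Walk.cons (show (auxGraph G).Adj (u, i) (v, (decide (s(u, v) ∈ F)) ^^ i) from h)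
        (liftWalk F p ((decide (s(u, v) ∈ F)) ^^ i))).copy rfl
        (by rw [flipB_cons, Bool.xor_assoc, Bool.xor_left_comm])

lemma walkWeight_liftWalk (F : Finset (Sym2 V)) {a b : V} (p : G.Walk a b) (i : Bool) :
    walkWeight G x (liftWalk F p i) =
      (p.edges.map (fun e => if e ∈ F then 1 - x e else x e)).sum := by
  induction p generalizing i with
  | nil => rw [liftWalk, walkWeight_copy, walkWeight_nil]; simp
  | @cons u v w h p ih =>
    rw [liftWalk]
    rw [walkWeight_copy, walkWeight_cons, ih, Walk.edges_cons, List.map_cons, List.sum_cons]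
    congr 1
    by_cases hm : s(u, v) ∈ F
    · rw [if_pos hm]
      have hd : (decide (s(u, v) ∈ F)) = true := by simp [hm]
      rw [hd]
      simp [stepWeight, Bool.true_xor]
    · rw [if_neg hm]
      have hd : (decide (s(u, v) ∈ F)) = false := by simp [hm]
      rw [hd]
      simp [stepWeight, Bool.false_xor]

lemma flipB_true_iff (F : Finset (Sym2 V)) {a b : V} (p : G.Walk a b) :
    flipB F p = true ↔ Odd (p.edges.countP (fun e => decide (e ∈ F))) := by
  induction p with
  | nil => simp
  | @cons u v w h p ih =>
    rw [flipB_cons, Walk.edges_cons, List.countP_cons]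
    by_cases hm : s(u, v) ∈ F
    · rw [if_pos (by simpa using hm), Nat.odd_add_one, ← ih]
      simp [hm]
    · rw [if_neg (by simpa using hm), Nat.add_zero, ← ih]
      simp [hm]

lemma countP_mem_eq_card {F : Finset (Sym2 V)} {l : List (Sym2 V)} (hnd : l.Nodup)
    (hF : F ⊆ l.toFinset) : l.countP (fun e => decide (e ∈ F)) = F.card := by
  rw [List.countP_eq_length_filter]
  rw [← List.toFinset_card_of_nodup (hnd.filter _)]
  congr 1
  apply Finset.ext
  intro e
  simp only [List.mem_toFinset, List.mem_filter, decide_eq_true_eq]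
  constructor
  · exact fun h => h.2
  · intro h
    exact ⟨by simpa using hF h, h⟩

lemma sum_g_split (C F : Finset (Sym2 V)) (hFC : F ⊆ C) :
    (∑ e ∈ C, (if e ∈ F then 1 - x e else x e)) =
      (∑ e ∈ F, (1 - x e)) + ∑ e ∈ C \ F, x e := by
  rw [← Finset.sum_filter_add_sum_filter_not C (· ∈ F)]
  congr 1
  · rw [show C.filter (· ∈ F) = F by
      rw [Finset.filter_mem_eq_inter]; exact Finset.inter_eq_right.mpr hFC]
    exact Finset.sum_congr rfl fun e he => if_pos he
  · rw [Finset.sdiff_eq_filter]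
    refine Finset.sum_congr rfl fun e he => ?_
    rw [if_neg (Finset.mem_filter.mp he).2]

lemma backward (C F : Finset (Sym2 V)) (v : V) (p : G.Walk v v) (hcyc : p.IsCycle)
    (hC : C = p.edges.toFinset) (hFC : F ⊆ C) (hodd : Odd F.card)
    (hlt : (∑ e ∈ F, (1 - x e)) + (∑ e ∈ C \ F, x e) < 1) :
    ∃ (v : V) (q : (auxGraph G).Walk (v, false) (v, true)), walkWeight G x q < 1 := by
  have hnd : p.edges.Nodup := ((Walk.isCycle_def p).mp hcyc).1.edges_nodup
  have hflip : flipB F p = true := by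
    rw [flipB_true_iff, countP_mem_eq_card hnd (hC ▸ hFC)]
    exact hodd
  refine ⟨v, (liftWalk F p false).copy rfl (by rw [hflip]; rfl), ?_⟩
  rw [walkWeight_copy, walkWeight_liftWalk]
  have h1 : (p.edges.map (fun e => if e ∈ F then 1 - x e else x e)).sum
      = ∑ e ∈ C, (if e ∈ F then 1 - x e else x e) := by
    rw [hC, List.sum_toFinset _ hnd]
  rw [h1, sum_g_split C F hFC]
  exact hlt

lemma adj_of_length_one {W : Type*} {H : SimpleGraph W} {a b : W} (q : H.Walk a b)
    (h : q.length = 1) : H.Adj a b := by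
  cases q with
  | nil => simp at h
  | cons h' r =>
    cases r with
    | nil => exact h'
    | cons h'' r' => simp [Walk.length_cons] at h

lemma bool_cases (c d : Bool) (h : c ≠ d) : d = !c := by cases c <;> cases d <;> simp_all

lemma weight_eq_one_of_length_two {a b : V × Bool} (q : (auxGraph G).Walk a b)
    (hab : a.1 = b.1) (hne : a.2 ≠ b.2) (h : q.length = 2) : walkWeight G x q = 1 := by
  cases q with
  | nil => exact absurd rfl hne
  | @cons _ c _ h1 r =>
    cases r with
    | nil => simp at h
    | @cons _ d _ h2 r2 =>
      cases r2 with
      | nil =>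
        rw [walkWeight_cons, walkWeight_cons, walkWeight_nil]
        obtain ⟨w1, i⟩ := a
        obtain ⟨w2, j⟩ := c
        obtain ⟨w3, k⟩ := b
        simp only at hab hne
        subst hab
        have hk : k = !i := bool_cases i k hne
        subst hk
        have hs : x s(w2, w1) = x s(w1, w2) := by rw [Sym2.eq_swap]
        cases i <;> cases j <;> simp [stepWeight, hs] <;> ring
      | cons h3 r3 => simp [Walk.length_cons] at h

lemma forward (hx : ∀ e ∈ G.edgeSet, 0 ≤ x e ∧ x e ≤ 1) :
    ∀ (N : ℕ) (u : V) (i : Bool) (q : (auxGraph G).Walk (u, i) (u, !i)),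
    q.length ≤ N → walkWeight G x q < 1 →
    ∃ C F : Finset (Sym2 V), IsSimpleCycleEdgeSet G C ∧ F ⊆ C ∧ Odd F.card ∧
      (∑ e ∈ F, (1 - x e)) + (∑ e ∈ C \ F, x e) < 1 := by
  intro N
  induction N with
  | zero =>
    intro u i q hlen _
    exfalso
    have h0 : q.darts = [] := List.length_eq_zero_iff.mp (by rw [Walk.length_darts]; omega)
    have := (even_countP_flip q).mp (by rw [h0]; simp)
    simp at this
  | succ N ih =>
    intro u i q hlen hw
    by_cases hns : q.support.Nodup
    · have hcons := List.nodup_cons.mp (q.support_eq_cons ▸ hns)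
      by_cases hts : (q.support.tail.map Prod.fst).Nodup
      · -- Case C : projection is a cycle
        have hne0 : q.length ≠ 0 := by
          intro h0
          have hd : q.darts = [] := List.length_eq_zero_iff.mp (by rw [Walk.length_darts, h0])
          have := (even_countP_flip q).mp (by rw [hd]; simp)
          simp at this
        have hne1 : q.length ≠ 1 := by
          intro h1
          have hadj : (auxGraph G).Adj (u, i) (u, !i) := adj_of_length_one q h1
          exact G.irrefl hadj
        have hne2 : q.length ≠ 2 := by
          intro h2
          rw [weight_eq_one_of_length_two q rfl (by simp) h2] at hw
          exact lt_irrefl 1 hw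
        have h3 : 3 ≤ q.length := by omega
        set f := auxHom G with hf
        set q' : G.Walk u u := q.map f with hq'
        have hproj : q'.support = q.support.map Prod.fst := Walk.support_map f q
        have hnd' : q'.support.tail.Nodup := by
          rw [hproj, ← List.map_tail]
          exact hts
        have hlen3 : 3 ≤ q'.length := le_of_le_of_eq h3 (Walk.length_map f q).symm
        have hcyc : q'.IsCycle := by
          rw [Walk.isCycle_def]
          refine ⟨isTrail_closed hlen3 hnd', ?_, hnd'⟩
          intro hnil
          rw [hnil] at hlen3
          simp at hlen3
        set pe : (auxGraph G).Dart → Sym2 V := fun d => s(d.toProd.1.1, d.toProd.2.1) with hpe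
        have hedges : q'.edges = q.darts.map pe := by
          refine (Walk.edges_map f q).trans ?_
          show List.map _ (q.darts.map Dart.edge) = _
          rw [List.map_map]
          apply List.map_congr_left
          intro d _
          show Sym2.map Prod.fst d.edge = pe d
          have hde : d.edge = s(d.toProd.1, d.toProd.2) := rfl
          rw [hde, Sym2.map_pair_eq]
        set F : Finset (Sym2 V) :=
          ((q.darts.filter (fun d => d.toProd.1.2 != d.toProd.2.2)).map pe).toFinset with hF
        have hndE : (q.darts.map pe).Nodup := by
          rw [← hedges]
          exact ((Walk.isCycle_def q').mp hcyc).1.edges_nodup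
        have hinj := List.inj_on_of_nodup_map hndE
        set C : Finset (Sym2 V) := q'.edges.toFinset with hC
        have hCF : F ⊆ C := by
          intro e he
          rw [hF, List.mem_toFinset, List.mem_map] at he
          obtain ⟨d, hd, rfl⟩ := he
          rw [hC, List.mem_toFinset, hedges, List.mem_map]
          exact ⟨d, List.mem_of_mem_filter hd, rfl⟩
        have hmemiff : ∀ d ∈ q.darts, ((d.toProd.1.2 != d.toProd.2.2) = true ↔ pe d ∈ F) := by
          intro d hd
          constructor
          · intro hflip
            rw [hF, List.mem_toFinset, List.mem_map]
            exact ⟨d, List.mem_filter.mpr ⟨hd, hflip⟩, rfl⟩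
          · intro hmem
            rw [hF, List.mem_toFinset, List.mem_map] at hmem
            obtain ⟨d', hd', hpe'⟩ := hmem
            have hd'm := List.mem_of_mem_filter hd'
            have hdd := hinj hd'm hd hpe'
            rw [← hdd]
            exact (List.mem_filter.mp hd').2
        have hwq : walkWeight G x q = ∑ e ∈ C, (if e ∈ F then 1 - x e else x e) := by
          rw [hC, hedges, List.sum_toFinset _ hndE]
          unfold walkWeight
          rw [List.map_map]
          apply congrArg List.sum
          apply List.map_congr_left
          intro d hd
          show stepWeight x d.toProd.1 d.toProd.2 = if pe d ∈ F then 1 - x (pe d) else x (pe d)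
          unfold stepWeight
          by_cases hh : d.toProd.1.2 = d.toProd.2.2
          · rw [if_pos hh, if_neg]
            intro hmem
            have := (hmemiff d hd).mpr hmem
            simp [hh] at this
          · rw [if_neg hh, if_pos ((hmemiff d hd).mp (by simpa using hh))]
        have hcard : F.card = q.darts.countP (fun d => d.toProd.1.2 != d.toProd.2.2) := by
          rw [hF, List.toFinset_card_of_nodup
            (List.Nodup.sublist (List.Sublist.map pe (List.filter_sublist (l := q.darts))) hndE),
            List.length_map, ← List.countP_eq_length_filter]
        have hoddF : Odd F.card := by
          rw [hcard, ← Nat.not_even_iff_odd]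
          intro hev
          have := (even_countP_flip q).mp hev
          simp at this
        refine ⟨C, F, ⟨u, q', hcyc, hC⟩, hCF, hoddF, ?_⟩
        rw [← sum_g_split C F hCF, ← hwq]
        exact hw
      · -- Case B : a repeated first coordinate with different bools
        obtain ⟨a, haT, b, hbT, hfst, hab⟩ : ∃ a ∈ q.support.tail, ∃ b ∈ q.support.tail,
            a.1 = b.1 ∧ a ≠ b := by
          by_contra hcon
          push_neg at hcon
          exact hts (List.Nodup.map_on hcon hcons.2)
        have hb2 : a.2 ≠ b.2 := fun h => hab (Prod.ext_iff.mpr ⟨hfst, h⟩)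
        have hbeq : b = (a.1, !a.2) := Prod.ext_iff.mpr ⟨hfst.symm, bool_cases a.2 b.2 hb2⟩
        have hkey : ∀ c ∈ q.support.tail, c.1 = u → c = (u, !i) := by
          intro c hc h1
          by_cases h2 : c.2 = i
          · exact absurd ((Prod.ext_iff.mpr ⟨h1, h2⟩ : c = (u, i)) ▸ hc) hcons.1
          · exact Prod.ext_iff.mpr ⟨h1, bool_cases i c.2 fun hh => h2 hh.symm⟩
        have hne_u : a.1 ≠ u := by
          intro h
          have ha' : a = (u, !i) := hkey a haT h
          have hb' : b = (u, !i) := hkey b hbT (by rw [← hfst]; exact h)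
          exact hab (ha'.trans hb'.symm)
        have haS : a ∈ q.support := List.mem_of_mem_tail haT
        set T' := q.takeUntil a haS with hT'
        set Dr := q.dropUntil a haS with hDr
        have hsp1 : T'.append Dr = q := q.take_spec haS
        have hT1 : 1 ≤ T'.length := by
          rcases Nat.eq_zero_or_pos T'.length with h0 | h1
          · exact absurd ((Walk.nil_iff_length_eq.mpr h0).eq ▸ haT) hcons.1
          · exact h1
        by_cases hbd : b ∈ Dr.support
        · set S := Dr.takeUntil b hbd with hS
          set Re := Dr.dropUntil b hbd with hRe
          have hsp2 : S.append Re = Dr := Dr.take_spec hbd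
          have hwq : walkWeight G x q
              = walkWeight G x T' + (walkWeight G x S + walkWeight G x Re) := by
            rw [← hsp1, ← hsp2, walkWeight_append, walkWeight_append]
          have hlq : q.length = T'.length + (S.length + Re.length) := by
            rw [← hsp1, ← hsp2, Walk.length_append, Walk.length_append]
          have hw' : walkWeight G x S < 1 := by
            have n1 := walkWeight_nonneg hx T'
            have n2 := walkWeight_nonneg hx Re
            linarith
          have hl' : S.length ≤ N := by omega
          exact ih a.1 a.2 (S.copy rfl hbeq)
            (by rw [Walk.length_copy]; exact hl')
            (by rw [walkWeight_copy]; exact hw')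
        · have hbt : b ∈ T'.support := by
            have hbS : b ∈ q.support := List.mem_of_mem_tail hbT
            rw [← hsp1, Walk.mem_support_append_iff] at hbS
            tauto
          set T1 := T'.takeUntil b hbt with hT1'
          set S := T'.dropUntil b hbt with hS
          have hsp2 : T1.append S = T' := T'.take_spec hbt
          have hwq : walkWeight G x q
              = (walkWeight G x T1 + walkWeight G x S) + walkWeight G x Dr := by
            rw [← hsp1, ← hsp2, walkWeight_append, walkWeight_append]
          have hlq : q.length = (T1.length + S.length) + Dr.length := by
            rw [← hsp1, ← hsp2, Walk.length_append, Walk.length_append]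
          have hD1 : 1 ≤ Dr.length := by
            rcases Nat.eq_zero_or_pos Dr.length with h0 | h1
            · exact absurd (congrArg Prod.fst (Walk.nil_iff_length_eq.mpr h0).eq) hne_u
            · exact h1
          have hw' : walkWeight G x S < 1 := by
            have n1 := walkWeight_nonneg hx T1
            have n2 := walkWeight_nonneg hx Dr
            linarith
          have hl' : S.length ≤ N := by omega
          exact ih a.1 (!a.2)
            (S.copy hbeq (Prod.ext_iff.mpr ⟨rfl, (Bool.not_not a.2).symm⟩))
            (by rw [Walk.length_copy]; exact hl')
            (by rw [walkWeight_copy]; exact hw')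
    · -- Case A : a repeated vertex of the auxiliary graph, splice out a closed subwalk
      letI : BEq (V × Bool) := instBEqOfDecidableEq
      haveI : LawfulBEq (V × Bool) := instLawfulBEq
      obtain ⟨a, hdup⟩ := List.exists_duplicate_iff_not_nodup.mpr hns
      have ha : a ∈ q.support := hdup.mem
      have hcount := List.duplicate_iff_two_le_count.mp hdup
      set T := q.takeUntil a ha with hT
      set R := q.dropUntil a ha with hRdef
      have hspec : T.append R = q := q.take_spec ha
      have hcs : q.support = T.support ++ R.support.tail := by
        rw [← hspec, Walk.support_append]
      have hcT := q.count_support_takeUntil_eq_one (u := a) ha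
      have haRt : 1 ≤ List.count a R.support.tail := by
        rw [hcs, List.count_append, hcT] at hcount
        omega
      have hR2 : 2 ≤ List.count a R.support := by
        rw [R.support_eq_cons, List.count_cons_self]
        omega
      set R' := R.reverse with hR'
      have haR' : a ∈ R'.support := R'.end_mem_support
      set B := R'.takeUntil a haR' with hB
      set D := R'.dropUntil a haR' with hD
      have hspec2 : B.append D = R' := R'.take_spec haR'
      have hcB := R'.count_support_takeUntil_eq_one (u := a) haR'
      have hcR' : 2 ≤ List.count a R'.support := by
        rw [hR', Walk.support_reverse, List.count_reverse]
        exact hR2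
      have hDt : 1 ≤ List.count a D.support.tail := by
        rw [← hspec2, Walk.support_append, List.count_append, hcB] at hcR'
        omega
      have hDlen : 1 ≤ D.length := by
        have h1 : 1 ≤ D.support.tail.length := le_trans hDt (List.count_le_length (a := a))
        have h2 : D.support.length = D.length + 1 := D.length_support
        rw [List.length_tail] at h1
        omega
      set q2 := T.append B.reverse with hq2
      have hlen2 : q2.length ≤ N := by
        have e1 : T.length + R.length = q.length := by rw [← hspec, Walk.length_append]
        have e2 : B.length + D.length = R'.length := by rw [← hspec2, Walk.length_append]
        have e3 : R'.length = R.length := Walk.length_reverse R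
        have e4 : q2.length = T.length + B.length := by
          rw [hq2, Walk.length_append, Walk.length_reverse]
        omega
      have hw2 : walkWeight G x q2 < 1 := by
        have e1 : walkWeight G x T + walkWeight G x R = walkWeight G x q := by
          rw [← hspec, walkWeight_append]
        have e2 : walkWeight G x B + walkWeight G x D = walkWeight G x R' := by
          rw [← hspec2, walkWeight_append]
        have e3 : walkWeight G x R' = walkWeight G x R := walkWeight_reverse R
        have e4 : walkWeight G x q2 = walkWeight G x T + walkWeight G x B := by
          rw [hq2, walkWeight_append, walkWeight_reverse]
        have hDw : 0 ≤ walkWeight G x D := walkWeight_nonneg hx D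
        linarith
      exact ih u i q2 hlen2 hw2

end OCS

/-- Correctness of odd-cycle separation via the auxiliary graph: for `x : E → [0,1]`
there is a walk from `(v,0)` to `(v,1)` in `H` of weight `< 1` for some `v` if and only
if `x` violates some cycle inequality on a simple cycle of `G`. -/
theorem stmt11 [Fintype V] [DecidableEq V] (G : SimpleGraph V) (x : Sym2 V → ℝ)
    (hx : ∀ e ∈ G.edgeSet, 0 ≤ x e ∧ x e ≤ 1) :
    (∃ (v : V) (p : (auxGraph G).Walk (v, false) (v, true)), walkWeight G x p < 1) ↔
    (∃ (C F : Finset (Sym2 V)), IsSimpleCycleEdgeSet G C ∧ F ⊆ C ∧ Odd F.card ∧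
      (∑ e ∈ F, (1 - x e)) + (∑ e ∈ C \ F, x e) < 1) := by
  constructor
  · rintro ⟨v, p, hp⟩
    exact OCS.forward hx p.length v false p le_rfl hp
  · rintro ⟨C, F, ⟨v, p, hcyc, hC⟩, hFC, hodd, hlt⟩
    exact OCS.backward C F v p hcyc hC hFC hodd hlt
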